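/- Let T_0 be an interior triangle with neighboring triangles T_1, T_2, T_3 sharing edges e_1, e_2, e_3 of T_0 respectively, with areas S_0, S_1, S_2, S_3. The field ψ_{T_0} equal to (S_j/(S_j+S_0)) w_{T_j,e_j} on T_j (j=1,2,3), to (1/3)[∑_{j=1}^3 ((S_j−2S_0)/(S_j+S_0)) w_{T_0,e_j} + w_{T_0,e_2,e_3} + w_{T_0,e_3,e_1} + w_{T_0,e_1,e_2}] on T_0, and zero elsewhere, is divergence free on each cell and has continuous normal components and continuous edge-integral tangential components across the edges e_1, e_2, e_3, with vanishing normal components and vanishing edge-integral tangential components on the outer boundary of the four-cell patch. -/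

import Mathlib

open MeasureTheory
open scoped Classical

noncomputable section

/-- The plane. -/
abbrev V2 : Type := ℝ × ℝ

/-- Euclidean dot product on the plane. -/
def dot2 (u v : V2) : ℝ := u.1 * v.1 + u.2 * v.2

/-- 2D cross product. -/
def cross2 (u v : V2) : ℝ := u.1 * v.2 - u.2 * v.1

/-- Euclidean norm on the plane. -/
def enorm2 (u : V2) : ℝ := Real.sqrt (u.1 ^ 2 + u.2 ^ 2)

/-- rotation by 90 degrees (a normal vector of the direction `u`). -/
def rot90 (u : V2) : V2 := (-u.2, u.1)

/-- `f` is (the restriction of) a polynomial of total degree at most `k`. -/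
def IsPolyDeg (k : ℕ) (f : V2 → ℝ) : Prop :=
  ∃ p : MvPolynomial (Fin 2) ℝ, p.totalDegree ≤ k ∧
    ∀ x : V2, f x = MvPolynomial.eval (fun i : Fin 2 => if i = 0 then x.1 else x.2) p

/-- A vector field whose two components are polynomials of degree at most `k`. -/
def IsVPolyDeg (k : ℕ) (v : V2 → V2) : Prop :=
  IsPolyDeg k (fun x => (v x).1) ∧ IsPolyDeg k (fun x => (v x).2)

/-- partial derivative in the `x` direction -/
def pd1 (f : V2 → ℝ) (x : V2) : ℝ := fderiv ℝ f x (1, 0)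

/-- partial derivative in the `y` direction -/
def pd2 (f : V2 → ℝ) (x : V2) : ℝ := fderiv ℝ f x (0, 1)

/-- `curl` of a scalar function: `(∂w/∂y, -∂w/∂x)`. -/
def curl2 (w : V2 → ℝ) : V2 → V2 := fun x => (pd2 w x, - pd1 w x)

/-- divergence of a planar vector field -/
def div2 (v : V2 → V2) (x : V2) : ℝ :=
  pd1 (fun y => (v y).1) x + pd2 (fun y => (v y).2) x

/-- Parametrization of the segment from `p` to `q`. -/
def seg (p q : V2) (s : ℝ) : V2 := p + s • (q - p)

/-- The barycentric coordinate, on the triangle with vertices `p, q, r`,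
associated with the vertex `p`. -/
def bary (p q r : V2) (x : V2) : ℝ :=
  cross2 (q - x) (r - x) / cross2 (q - p) (r - p)

/-- The closed triangle with vertices `p, q, r`. -/
def hull3 (p q r : V2) : Set V2 := convexHull ℝ {p, q, r}

/-- On the triangle `(p,q,r)`, the divergence-free function
`w_{T,e} := curl(λ' λ'' (3λ − 1))` associated with the edge `e` opposite `p`
(`λ` is the barycentric coordinate of `p`). -/
def wT (p q r : V2) : V2 → V2 :=
  curl2 (fun x => bary q r p x * bary r p q x * (3 * bary p q r x - 1))

/-- On the triangle `(p,q,r)`, the divergence-free function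
`w_{T,e',e''} := curl(λ²)` associated with the two edges `e', e''` meeting at `p`
(`λ` is the barycentric coordinate of `p`, opposite the remaining edge). -/
def wP (p q r : V2) : V2 → V2 :=
  curl2 (fun x => (bary p q r x) ^ 2)

/-- The normal component of `v` along the segment `[p,q]` is affine (degree ≤ 1)
in the arclength parameter. -/
def NormalP1On (p q : V2) (v : V2 → V2) : Prop :=
  ∃ α β : ℝ, ∀ s ∈ Set.Icc (0 : ℝ) 1,
    dot2 (v (seg p q s)) (rot90 (q - p)) = α + β * s

/-- Membership in `P^{2-}` of the triangle with vertices `p, q, r`. -/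
def memP2mTri (p q r : V2) (v : V2 → V2) : Prop :=
  IsVPolyDeg 2 v ∧ NormalP1On p q v ∧ NormalP1On q r v ∧ NormalP1On r p v

/-- The normal components of `u` and `w` agree on the segment `[p,q]`. -/
def NormalCont (p q : V2) (u w : V2 → V2) : Prop :=
  ∀ s ∈ Set.Icc (0 : ℝ) 1,
    dot2 (u (seg p q s)) (rot90 (q - p)) = dot2 (w (seg p q s)) (rot90 (q - p))

/-- The edge integrals of the tangential components of `u` and `w` on `[p,q]` agree. -/
def TangMeanCont (p q : V2) (u w : V2 → V2) : Prop :=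
  (∫ s in (0:ℝ)..1, dot2 (u (seg p q s)) (q - p)) =
    ∫ s in (0:ℝ)..1, dot2 (w (seg p q s)) (q - p)

/-- The normal component of `u` vanishes on the segment `[p,q]`. -/
def NormalZero (p q : V2) (u : V2 → V2) : Prop :=
  ∀ s ∈ Set.Icc (0 : ℝ) 1, dot2 (u (seg p q s)) (rot90 (q - p)) = 0

/-- The edge integral of the tangential component of `u` on `[p,q]` vanishes. -/
def TangMeanZero (p q : V2) (u : V2 → V2) : Prop :=
  (∫ s in (0:ℝ)..1, dot2 (u (seg p q s)) (q - p)) = 0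

/-- An interior vertex patch: `m ≥ 3` triangles `T i = conv{O, A (i−1), A i}`
around the interior vertex `O`, cyclically ordered (each cell positively
oriented and nondegenerate) with pairwise disjoint interiors. -/
structure VertexPatch (m : ℕ) where
  O : V2
  A : ZMod m → V2
  hm : 3 ≤ m
  nondeg : ∀ i : ZMod m, 0 < cross2 (A (i - 1) - O) (A i - O)
  disj : ∀ i j : ZMod m, i ≠ j →
    interior (hull3 O (A (i - 1)) (A i)) ∩ interior (hull3 O (A (j - 1)) (A j)) = ∅

namespace VertexPatch

variable {m : ℕ} (P : VertexPatch m)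

/-- Area `S_i` of the cell `T_i`. -/
def S (i : ZMod m) : ℝ := cross2 (P.A (i - 1) - P.O) (P.A i - P.O) / 2

/-- Length `d_{m+i}` of the outer (boundary) edge `A_{i-1} A_i`. -/
def dOut (i : ZMod m) : ℝ := enorm2 (P.A i - P.A (i - 1))

/-- `Z_O`: piecewise-`P^{2-}` fields on the patch, divergence free on each cell,
with continuous normal components and continuous edge-integral tangential
components across the interior edges `O A_i`, and vanishing normal components and
edge-integral tangential components on the boundary edges `A_{i-1} A_i`. -/
def memZO (v : ZMod m → V2 → V2) : Prop :=
  (∀ i, memP2mTri P.O (P.A (i - 1)) (P.A i) (v i)) ∧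
  (∀ i, ∀ x ∈ hull3 P.O (P.A (i - 1)) (P.A i), div2 (v i) x = 0) ∧
  (∀ i, NormalCont P.O (P.A i) (v i) (v (i + 1)) ∧
        TangMeanCont P.O (P.A i) (v i) (v (i + 1))) ∧
  (∀ i, NormalZero (P.A (i - 1)) (P.A i) (v i) ∧
        TangMeanZero (P.A (i - 1)) (P.A i) (v i))

end VertexPatch

/-- Area `S_0` of the central cell `T_0` with vertices `B 0, B 1, B 2`. -/
def S0area (B : Fin 3 → V2) : ℝ := |cross2 (B 1 - B 0) (B 2 - B 0)| / 2

/-- Area `S_j` of the neighbor `T_j` with vertices `C j, B (j+1), B (j+2)`. -/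
def Sjarea (B C : Fin 3 → V2) (j : Fin 3) : ℝ :=
  |cross2 (B (j + 1) - C j) (B (j + 2) - C j)| / 2

/-- The piece of `ψ_{T_0}` on the neighbor `T_j`: `(S_j/(S_j+S_0)) w_{T_j,e_j}`. -/
def psiT0nb (B C : Fin 3 → V2) (j : Fin 3) : V2 → V2 := fun x =>
  (Sjarea B C j / (Sjarea B C j + S0area B)) • wT (C j) (B (j + 1)) (B (j + 2)) x

/-- The piece of `ψ_{T_0}` on the central cell `T_0`:
`(1/3)[∑_j ((S_j−2S_0)/(S_j+S_0)) w_{T_0,e_j} + w_{T_0,e_2,e_3}+w_{T_0,e_3,e_1}+w_{T_0,e_1,e_2}]`. -/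
def psiT0c (B C : Fin 3 → V2) : V2 → V2 := fun x =>
  (1/3 : ℝ) •
    (∑ j : Fin 3, ((Sjarea B C j - 2 * S0area B) / (Sjarea B C j + S0area B))
        • wT (B j) (B (j + 1)) (B (j + 2)) x
     + ∑ j : Fin 3, wP (B j) (B (j + 1)) (B (j + 2)) x)

-- infrastructure
abbrev Tri : Type := ℝ × ℝ × ℝ

def aff (t : Tri) (x : V2) : ℝ := t.1 * x.1 + t.2.1 * x.2 + t.2.2

def lmap (t : Tri) : V2 →L[ℝ] ℝ :=
  t.1 • (ContinuousLinearMap.fst ℝ ℝ ℝ) + t.2.1 • (ContinuousLinearMap.snd ℝ ℝ ℝ)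

@[simp] lemma lmap_apply (t : Tri) (v : V2) : lmap t v = t.1 * v.1 + t.2.1 * v.2 := by
  simp [lmap]

lemma haff (t : Tri) (x : V2) : HasFDerivAt (aff t) (lmap t) x := by
  have h1 : HasFDerivAt (fun y : V2 => t.1 * y.1)
      (t.1 • (ContinuousLinearMap.fst ℝ ℝ ℝ)) x := (hasFDerivAt_fst.const_mul t.1)
  have h2 : HasFDerivAt (fun y : V2 => t.2.1 * y.2)
      (t.2.1 • (ContinuousLinearMap.snd ℝ ℝ ℝ)) x := (hasFDerivAt_snd.const_mul t.2.1)
  exact (h1.add h2).add_const t.2.2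

def d2 (t u : Tri) (x : V2) : V2 →L[ℝ] ℝ := aff t x • lmap u + aff u x • lmap t

lemma haff2 (t u : Tri) (x : V2) :
    HasFDerivAt (fun y => aff t y * aff u y) (d2 t u x) x := (haff t x).mul (haff u x)

def cvf (t1 t2 t3 : Tri) (x : V2) : V2 :=
  (t1.2.1 * (aff t2 x * aff t3 x) + t2.2.1 * (aff t1 x * aff t3 x)
     + t3.2.1 * (aff t1 x * aff t2 x),
   -(t1.1 * (aff t2 x * aff t3 x) + t2.1 * (aff t1 x * aff t3 x)
     + t3.1 * (aff t1 x * aff t2 x)))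

lemma haff3 (t1 t2 t3 : Tri) (x : V2) :
    HasFDerivAt (fun y => aff t1 y * aff t2 y * aff t3 y)
      ((aff t1 x * aff t2 x) • lmap t3 + aff t3 x • d2 t1 t2 x) x :=
  (haff2 t1 t2 x).mul (haff t3 x)

lemma curl2_aff3 (t1 t2 t3 : Tri) :
    curl2 (fun x => aff t1 x * aff t2 x * aff t3 x) = cvf t1 t2 t3 := by
  funext x
  have h := haff3 t1 t2 t3 x
  simp only [curl2, pd1, pd2, h.fderiv, cvf]
  simp [d2, Prod.ext_iff]
  constructor <;> ring

lemma hcvf1 (t1 t2 t3 : Tri) (x : V2) :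
    HasFDerivAt (fun y => (cvf t1 t2 t3 y).1)
      (t1.2.1 • d2 t2 t3 x + t2.2.1 • d2 t1 t3 x + t3.2.1 • d2 t1 t2 x) x := by
  simp only [cvf]
  exact (((haff2 t2 t3 x).const_mul t1.2.1).add ((haff2 t1 t3 x).const_mul t2.2.1)).add
    ((haff2 t1 t2 x).const_mul t3.2.1)

lemma hcvf2 (t1 t2 t3 : Tri) (x : V2) :
    HasFDerivAt (fun y => (cvf t1 t2 t3 y).2)
      (-(t1.1 • d2 t2 t3 x + t2.1 • d2 t1 t3 x + t3.1 • d2 t1 t2 x)) x := by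
  simp only [cvf]
  exact ((((haff2 t2 t3 x).const_mul t1.1).add ((haff2 t1 t3 x).const_mul t2.1)).add
    ((haff2 t1 t2 x).const_mul t3.1)).neg

lemma div2_smul_cvf (r : ℝ) (t1 t2 t3 : Tri) (x : V2) :
    div2 (fun y => r • cvf t1 t2 t3 y) x = 0 := by
  have h1 := (hcvf1 t1 t2 t3 x).const_mul r
  have h2 := (hcvf2 t1 t2 t3 x).const_mul r
  simp only [div2, pd1, pd2, Prod.smul_fst, Prod.smul_snd, smul_eq_mul]
  rw [h1.fderiv, h2.fderiv]
  simp only [d2, ContinuousLinearMap.add_apply, ContinuousLinearMap.smul_apply,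
    ContinuousLinearMap.neg_apply, lmap_apply, smul_eq_mul]
  ring

set_option maxHeartbeats 1000000 in
lemma div2_combo (k0 k1 k2 : ℝ) (a1 a2 a3 b1 b2 b3 c1 c2 c3 d1 d2' d3 e1 e2 e3 f1 f2 f3 : Tri)
    (x : V2) :
    div2 (fun y => (1/3 : ℝ) •
      (k0 • cvf a1 a2 a3 y + k1 • cvf b1 b2 b3 y + k2 • cvf c1 c2 c3 y +
        (cvf d1 d2' d3 y + cvf e1 e2 e3 y + cvf f1 f2 f3 y))) x = 0 := by
  have h1 := (((((hcvf1 a1 a2 a3 x).const_mul k0).add ((hcvf1 b1 b2 b3 x).const_mul k1)).add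
      ((hcvf1 c1 c2 c3 x).const_mul k2)).add
      (((hcvf1 d1 d2' d3 x).add (hcvf1 e1 e2 e3 x)).add (hcvf1 f1 f2 f3 x))).const_mul
      ((1:ℝ)/3)
  have h2 := (((((hcvf2 a1 a2 a3 x).const_mul k0).add ((hcvf2 b1 b2 b3 x).const_mul k1)).add
      ((hcvf2 c1 c2 c3 x).const_mul k2)).add
      (((hcvf2 d1 d2' d3 x).add (hcvf2 e1 e2 e3 x)).add (hcvf2 f1 f2 f3 x))).const_mul
      ((1:ℝ)/3)
  simp only [div2, pd1, pd2, Prod.smul_fst, Prod.smul_snd, Prod.fst_add, Prod.snd_add,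
    smul_eq_mul]
  simp only [Pi.add_apply] at h1 h2
  rw [h1.fderiv, h2.fderiv]
  simp only [d2, ContinuousLinearMap.add_apply, ContinuousLinearMap.smul_apply,
    ContinuousLinearMap.neg_apply, lmap_apply, smul_eq_mul]
  ring

def bt (p q r : V2) : Tri :=
  ((q.2 - r.2) / cross2 (q - p) (r - p), (r.1 - q.1) / cross2 (q - p) (r - p),
    cross2 q r / cross2 (q - p) (r - p))

def bt3 (p q r : V2) : Tri := (3 * (bt p q r).1, 3 * (bt p q r).2.1, 3 * (bt p q r).2.2 - 1)

lemma aff_bt (p q r x : V2) : aff (bt p q r) x = bary p q r x := by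
  simp only [aff, bt, bary, cross2]
  simp only [Prod.fst_sub, Prod.snd_sub]
  ring

lemma aff_bt3 (p q r x : V2) : aff (bt3 p q r) x = 3 * bary p q r x - 1 := by
  rw [← aff_bt]; simp only [aff, bt3]; ring

lemma wT_eq (p q r : V2) : wT p q r = cvf (bt q r p) (bt r p q) (bt3 p q r) := by
  rw [← curl2_aff3]
  unfold wT
  have : (fun x => bary q r p x * bary r p q x * (3 * bary p q r x - 1)) =
      fun x => aff (bt q r p) x * aff (bt r p q) x * aff (bt3 p q r) x :=
    funext fun x => by rw [aff_bt, aff_bt, aff_bt3]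
  rw [this]

def one3 : Tri := (0, 0, 1)

lemma wP_eq (p q r : V2) : wP p q r = cvf (bt p q r) (bt p q r) one3 := by
  rw [← curl2_aff3]
  unfold wP
  have : (fun x => bary p q r x ^ 2) =
      fun x => aff (bt p q r) x * aff (bt p q r) x * aff one3 x :=
    funext fun x => by rw [aff_bt]; simp [aff, one3]; ring
  rw [this]

lemma bary_fst (p q r : V2) (h : cross2 (q - p) (r - p) ≠ 0) : bary p q r p = 1 :=
  div_self h

lemma bary_snd (p q r : V2) : bary p q r q = 0 := by
  unfold bary cross2
  simp only [Prod.fst_sub, Prod.snd_sub]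
  rw [div_eq_zero_iff]; left; ring

lemma bary_thd (p q r : V2) : bary p q r r = 0 := by
  unfold bary cross2
  simp only [Prod.fst_sub, Prod.snd_sub]
  rw [div_eq_zero_iff]; left; ring

@[simp] lemma dot2_add (a b u : V2) : dot2 (a + b) u = dot2 a u + dot2 b u := by
  simp only [dot2, Prod.fst_add, Prod.snd_add]; ring

@[simp] lemma dot2_smul (r : ℝ) (a u : V2) : dot2 (r • a) u = r * dot2 a u := by
  simp only [dot2, Prod.smul_fst, Prod.smul_snd, smul_eq_mul]; ring

lemma aff_seg (t : Tri) (p q : V2) (s : ℝ) :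
    aff t (seg p q s) = aff t p + s * (aff t q - aff t p) := by
  simp only [aff, seg, Prod.fst_add, Prod.snd_add, Prod.smul_fst, Prod.smul_snd,
    Prod.fst_sub, Prod.snd_sub, smul_eq_mul]
  ring

lemma normal_cvf (t1 t2 t3 : Tri) (p q : V2) (s : ℝ) :
    dot2 (cvf t1 t2 t3 (seg p q s)) (rot90 (q - p)) =
      -((aff t1 q - aff t1 p) * ((aff t2 p + s * (aff t2 q - aff t2 p)) *
          (aff t3 p + s * (aff t3 q - aff t3 p)))
        + (aff t2 q - aff t2 p) * ((aff t1 p + s * (aff t1 q - aff t1 p)) *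
          (aff t3 p + s * (aff t3 q - aff t3 p)))
        + (aff t3 q - aff t3 p) * ((aff t1 p + s * (aff t1 q - aff t1 p)) *
          (aff t2 p + s * (aff t2 q - aff t2 p)))) := by
  simp only [cvf, dot2, rot90, aff_seg, Prod.fst_sub, Prod.snd_sub]
  simp only [aff, seg, Prod.fst_add, Prod.snd_add, Prod.smul_fst, Prod.smul_snd,
    Prod.fst_sub, Prod.snd_sub, smul_eq_mul]
  ring

lemma tang_cvf (t1 t2 t3 : Tri) (p q : V2) (s : ℝ) :
    dot2 (cvf t1 t2 t3 (seg p q s)) (q - p) =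
      (t1.2.1 * (q.1 - p.1) - t1.1 * (q.2 - p.2)) * ((aff t2 p + s * (aff t2 q - aff t2 p)) *
          (aff t3 p + s * (aff t3 q - aff t3 p)))
      + (t2.2.1 * (q.1 - p.1) - t2.1 * (q.2 - p.2)) * ((aff t1 p + s * (aff t1 q - aff t1 p)) *
          (aff t3 p + s * (aff t3 q - aff t3 p)))
      + (t3.2.1 * (q.1 - p.1) - t3.1 * (q.2 - p.2)) * ((aff t1 p + s * (aff t1 q - aff t1 p)) *
          (aff t2 p + s * (aff t2 q - aff t2 p))) := by
  simp only [cvf, dot2, aff, seg, Prod.fst_add, Prod.snd_add, Prod.smul_fst, Prod.smul_snd,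
    Prod.fst_sub, Prod.snd_sub, smul_eq_mul]
  ring

lemma int_poly2 (c0 c1 c2 : ℝ) :
    ∫ s in (0:ℝ)..1, (c0 + c1 * s + c2 * s ^ 2) = c0 + c1 / 2 + c2 / 3 := by
  rw [intervalIntegral.integral_add (by apply Continuous.intervalIntegrable; fun_prop)
      (by apply Continuous.intervalIntegrable; fun_prop),
    intervalIntegral.integral_add (by apply Continuous.intervalIntegrable; fun_prop)
      (by apply Continuous.intervalIntegrable; fun_prop),
    intervalIntegral.integral_const, intervalIntegral.integral_const_mul,
    intervalIntegral.integral_const_mul, integral_id, integral_pow]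
  norm_num
  ring

lemma cont_tang (t1 t2 t3 : Tri) (p q u : V2) :
    Continuous fun s : ℝ => dot2 (cvf t1 t2 t3 (seg p q s)) u := by
  simp only [cvf, dot2, aff, seg]
  fun_prop

lemma int_3prod (g1 g2 g3 a1 b1 a2 b2 a3 b3 : ℝ) :
    (∫ s in (0:ℝ)..1, (g1 * ((a2 + s * b2) * (a3 + s * b3)) +
        g2 * ((a1 + s * b1) * (a3 + s * b3)) + g3 * ((a1 + s * b1) * (a2 + s * b2)))) =
      g1 * (a2 * a3 + (a2 * b3 + a3 * b2) / 2 + b2 * b3 / 3) +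
      g2 * (a1 * a3 + (a1 * b3 + a3 * b1) / 2 + b1 * b3 / 3) +
      g3 * (a1 * a2 + (a1 * b2 + a2 * b1) / 2 + b1 * b2 / 3) := by
  have h : (fun s : ℝ => (g1 * ((a2 + s * b2) * (a3 + s * b3)) +
        g2 * ((a1 + s * b1) * (a3 + s * b3)) + g3 * ((a1 + s * b1) * (a2 + s * b2)))) =
      fun s : ℝ => ((g1 * a2 * a3 + g2 * a1 * a3 + g3 * a1 * a2) +
        (g1 * (a2 * b3 + a3 * b2) + g2 * (a1 * b3 + a3 * b1) + g3 * (a1 * b2 + a2 * b1)) * s +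
        (g1 * b2 * b3 + g2 * b1 * b3 + g3 * b1 * b2) * s ^ 2) :=
    funext fun s => by ring
  rw [h, int_poly2]
  ring

lemma int_tang (t1 t2 t3 : Tri) (p q : V2) :
    (∫ s in (0:ℝ)..1, dot2 (cvf t1 t2 t3 (seg p q s)) (q - p)) =
      (t1.2.1 * (q.1 - p.1) - t1.1 * (q.2 - p.2)) *
        (aff t2 p * aff t3 p + (aff t2 p * (aff t3 q - aff t3 p) +
          aff t3 p * (aff t2 q - aff t2 p)) / 2 +
          (aff t2 q - aff t2 p) * (aff t3 q - aff t3 p) / 3) +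
      (t2.2.1 * (q.1 - p.1) - t2.1 * (q.2 - p.2)) *
        (aff t1 p * aff t3 p + (aff t1 p * (aff t3 q - aff t3 p) +
          aff t3 p * (aff t1 q - aff t1 p)) / 2 +
          (aff t1 q - aff t1 p) * (aff t3 q - aff t3 p) / 3) +
      (t3.2.1 * (q.1 - p.1) - t3.1 * (q.2 - p.2)) *
        (aff t1 p * aff t2 p + (aff t1 p * (aff t2 q - aff t2 p) +
          aff t2 p * (aff t1 q - aff t1 p)) / 2 +
          (aff t1 q - aff t1 p) * (aff t2 q - aff t2 p) / 3) := by
  have h : (fun s : ℝ => dot2 (cvf t1 t2 t3 (seg p q s)) (q - p)) =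
      fun s : ℝ => ((t1.2.1 * (q.1 - p.1) - t1.1 * (q.2 - p.2)) *
          ((aff t2 p + s * (aff t2 q - aff t2 p)) * (aff t3 p + s * (aff t3 q - aff t3 p))) +
        (t2.2.1 * (q.1 - p.1) - t2.1 * (q.2 - p.2)) *
          ((aff t1 p + s * (aff t1 q - aff t1 p)) * (aff t3 p + s * (aff t3 q - aff t3 p))) +
        (t3.2.1 * (q.1 - p.1) - t3.1 * (q.2 - p.2)) *
          ((aff t1 p + s * (aff t1 q - aff t1 p)) * (aff t2 p + s * (aff t2 q - aff t2 p)))) :=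
    funext fun s => tang_cvf t1 t2 t3 p q s
  rw [h, int_3prod]

@[simp] lemma aff_one3 (x : V2) : aff one3 x = 1 := by simp [aff, one3]

lemma cross_cyc (p q r : V2) : cross2 (q - p) (r - p) = cross2 (r - q) (p - q) := by
  simp only [cross2, Prod.fst_sub, Prod.snd_sub]; ring

lemma bary_one_cyc (p q r : V2) (h : cross2 (q - p) (r - p) ≠ 0) :
    bary p q r p = 1 ∧ bary q r p q = 1 ∧ bary r p q r = 1 := by
  refine ⟨bary_fst _ _ _ h, bary_fst _ _ _ ?_, bary_fst _ _ _ ?_⟩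
  · rw [← cross_cyc]; exact h
  · rw [cross_cyc]; exact h

/-- tangential edge mean of `wT u v w` along edge `u → v` vanishes. -/
lemma far1 (u v w : V2) (h : cross2 (v - u) (w - u) ≠ 0) :
    (∫ s in (0:ℝ)..1, dot2 (cvf (bt v w u) (bt w u v) (bt3 u v w) (seg u v s)) (v - u)) = 0 := by
  obtain ⟨h1, h2, h3⟩ := bary_one_cyc u v w h
  rw [int_tang]
  simp only [aff_bt, aff_bt3, bary_snd, bary_thd, h1, h2, h3]
  ring

/-- tangential edge mean of `wT u v w` along edge `w → u` vanishes. -/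
lemma far2 (u v w : V2) (h : cross2 (v - u) (w - u) ≠ 0) :
    (∫ s in (0:ℝ)..1, dot2 (cvf (bt v w u) (bt w u v) (bt3 u v w) (seg w u s)) (u - w)) = 0 := by
  obtain ⟨h1, h2, h3⟩ := bary_one_cyc u v w h
  rw [int_tang]
  simp only [aff_bt, aff_bt3, bary_snd, bary_thd, h1, h2, h3]
  ring

/-- tangential edge mean of `wT u v w` along edge `u → w` vanishes. -/
lemma far4 (u v w : V2) (h : cross2 (v - u) (w - u) ≠ 0) :
    (∫ s in (0:ℝ)..1, dot2 (cvf (bt v w u) (bt w u v) (bt3 u v w) (seg u w s)) (w - u)) = 0 := by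
  obtain ⟨h1, h2, h3⟩ := bary_one_cyc u v w h
  rw [int_tang]
  simp only [aff_bt, aff_bt3, bary_snd, bary_thd, h1, h2, h3]
  ring

/-- tangential edge mean of `wP u v w` along edge `v → w` vanishes. -/
lemma far3 (u v w : V2) :
    (∫ s in (0:ℝ)..1, dot2 (cvf (bt u v w) (bt u v w) one3 (seg v w s)) (w - v)) = 0 := by
  rw [int_tang]
  simp only [aff_bt, bary_snd, bary_thd, one3]
  ring

lemma int_tang_combo (k0 k1 k2 : ℝ) (a1 a2 a3 b1 b2 b3 c1 c2 c3 d1 d2' d3 e1 e2 e3 f1 f2 f3 : Tri)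
    (p q : V2) :
    (∫ s in (0:ℝ)..1, (1/3 * (k0 * dot2 (cvf a1 a2 a3 (seg p q s)) (q - p) +
      k1 * dot2 (cvf b1 b2 b3 (seg p q s)) (q - p) +
      k2 * dot2 (cvf c1 c2 c3 (seg p q s)) (q - p) +
      (dot2 (cvf d1 d2' d3 (seg p q s)) (q - p) +
       dot2 (cvf e1 e2 e3 (seg p q s)) (q - p) +
       dot2 (cvf f1 f2 f3 (seg p q s)) (q - p))))) =
    1/3 * (k0 * (∫ s in (0:ℝ)..1, dot2 (cvf a1 a2 a3 (seg p q s)) (q - p)) +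
      k1 * (∫ s in (0:ℝ)..1, dot2 (cvf b1 b2 b3 (seg p q s)) (q - p)) +
      k2 * (∫ s in (0:ℝ)..1, dot2 (cvf c1 c2 c3 (seg p q s)) (q - p)) +
      ((∫ s in (0:ℝ)..1, dot2 (cvf d1 d2' d3 (seg p q s)) (q - p)) +
       (∫ s in (0:ℝ)..1, dot2 (cvf e1 e2 e3 (seg p q s)) (q - p)) +
       (∫ s in (0:ℝ)..1, dot2 (cvf f1 f2 f3 (seg p q s)) (q - p)))) := by
  have ii : ∀ (t1 t2 t3 : Tri), IntervalIntegrable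
      (fun s => dot2 (cvf t1 t2 t3 (seg p q s)) (q - p)) volume (0:ℝ) 1 :=
    fun t1 t2 t3 => (cont_tang t1 t2 t3 p q (q - p)).intervalIntegrable _ _
  rw [intervalIntegral.integral_const_mul,
    intervalIntegral.integral_add
      ((((ii a1 a2 a3).const_mul k0).add ((ii b1 b2 b3).const_mul k1)).add
        ((ii c1 c2 c3).const_mul k2))
      (((ii d1 d2' d3).add (ii e1 e2 e3)).add (ii f1 f2 f3)),
    intervalIntegral.integral_add
      (((ii a1 a2 a3).const_mul k0).add ((ii b1 b2 b3).const_mul k1))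
      ((ii c1 c2 c3).const_mul k2),
    intervalIntegral.integral_add ((ii a1 a2 a3).const_mul k0) ((ii b1 b2 b3).const_mul k1),
    intervalIntegral.integral_add ((ii d1 d2' d3).add (ii e1 e2 e3)) (ii f1 f2 f3),
    intervalIntegral.integral_add (ii d1 d2' d3) (ii e1 e2 e3),
    intervalIntegral.integral_const_mul, intervalIntegral.integral_const_mul,
    intervalIntegral.integral_const_mul]

/-- tangential edge mean of `wT u v w` along its opposite edge `v → w`. -/
lemma near1 (u v w : V2) (h : cross2 (v - u) (w - u) ≠ 0) :
    (∫ s in (0:ℝ)..1, dot2 (cvf (bt v w u) (bt w u v) (bt3 u v w) (seg v w s)) (w - v)) =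
      dot2 (w - v) (w - v) / cross2 (v - u) (w - u) := by
  obtain ⟨h1, h2, h3⟩ := bary_one_cyc u v w h
  have hc1 : cross2 (w - v) (u - v) = cross2 (v - u) (w - u) := by
    simp only [cross2, Prod.fst_sub, Prod.snd_sub]; ring
  have hc2 : cross2 (u - w) (v - w) = cross2 (v - u) (w - u) := by
    simp only [cross2, Prod.fst_sub, Prod.snd_sub]; ring
  rw [int_tang]
  simp only [aff_bt, aff_bt3, bary_snd, bary_thd, h1, h2, h3]
  simp only [bt, bt3, one3, hc1, hc2]
  field_simp
  simp only [dot2, cross2, Prod.fst_sub, Prod.snd_sub]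
  ring

/-- tangential edge mean of `wP u v w` (i.e. `curl (λ_u²)`) along edge `u → v`. -/
lemma near2 (u v w : V2) (h : cross2 (v - u) (w - u) ≠ 0) :
    (∫ s in (0:ℝ)..1, dot2 (cvf (bt u v w) (bt u v w) one3 (seg u v s)) (v - u)) =
      dot2 (w - v) (v - u) / cross2 (v - u) (w - u) := by
  obtain ⟨h1, h2, h3⟩ := bary_one_cyc u v w h
  rw [int_tang]
  simp only [aff_bt, aff_bt3, aff_one3, bary_snd, bary_thd, h1, h2, h3]
  simp only [bt, bt3, one3]
  field_simp
  simp only [dot2, cross2, Prod.fst_sub, Prod.snd_sub]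
  ring

/-- tangential edge mean of `wP u v w` along edge `w → u`. -/
lemma near3 (u v w : V2) (h : cross2 (v - u) (w - u) ≠ 0) :
    (∫ s in (0:ℝ)..1, dot2 (cvf (bt u v w) (bt u v w) one3 (seg w u s)) (u - w)) =
      dot2 (w - v) (u - w) / cross2 (v - u) (w - u) := by
  obtain ⟨h1, h2, h3⟩ := bary_one_cyc u v w h
  rw [int_tang]
  simp only [aff_bt, aff_bt3, aff_one3, bary_snd, bary_thd, h1, h2, h3]
  simp only [bt, bt3, one3]
  field_simp
  simp only [dot2, cross2, Prod.fst_sub, Prod.snd_sub]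
  ring

set_option maxHeartbeats 4000000 in
/-- the cell-patch field `ψ_{T_0}`. `T_0` has vertices `B 0, B 1, B 2`
(positively oriented); for each `j`, the neighbor `T_j` across the edge
`e_j = [B (j+1), B (j+2)]` (opposite `B j`) has third vertex `C j`, lying strictly on
the other side of that edge. The field equal to `psiT0nb j` on `T_j`, to `psiT0c`
on `T_0` and zero elsewhere is divergence free on each cell, has continuous normal
components and continuous edge-integral tangential components across `e_1, e_2, e_3`,
and has vanishing normal components and vanishing edge-integral tangential
components on the six outer edges of the four-cell patch. -/
theorem stmt14 (B C : Fin 3 → V2)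
    (hB : 0 < cross2 (B 1 - B 0) (B 2 - B 0))
    (hC : ∀ j : Fin 3, cross2 (B (j + 1) - C j) (B (j + 2) - C j) ≠ 0)
    (hside : ∀ j : Fin 3,
      cross2 (B (j + 2) - B (j + 1)) (C j - B (j + 1)) *
        cross2 (B (j + 2) - B (j + 1)) (B j - B (j + 1)) < 0) :
    (∀ x ∈ hull3 (B 0) (B 1) (B 2), div2 (psiT0c B C) x = 0) ∧
    (∀ j : Fin 3, ∀ x ∈ hull3 (C j) (B (j + 1)) (B (j + 2)),
      div2 (psiT0nb B C j) x = 0) ∧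
    (∀ j : Fin 3,
      NormalCont (B (j + 1)) (B (j + 2)) (psiT0c B C) (psiT0nb B C j) ∧
      TangMeanCont (B (j + 1)) (B (j + 2)) (psiT0c B C) (psiT0nb B C j)) ∧
    (∀ j : Fin 3,
      NormalZero (C j) (B (j + 1)) (psiT0nb B C j) ∧
      TangMeanZero (C j) (B (j + 1)) (psiT0nb B C j) ∧
      NormalZero (C j) (B (j + 2)) (psiT0nb B C j) ∧
      TangMeanZero (C j) (B (j + 2)) (psiT0nb B C j)) := by
  have hD0 : cross2 (B 1 - B 0) (B 2 - B 0) ≠ 0 := ne_of_gt hB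
  have hDjneg : ∀ j : Fin 3, cross2 (B (j+1) - C j) (B (j+2) - C j) < 0 := by
    intro j
    have h1 : cross2 (B (j + 2) - B (j + 1)) (B j - B (j + 1)) =
        cross2 (B 1 - B 0) (B 2 - B 0) := by
      fin_cases j <;>
        simp only [Fin.mk_zero, Fin.mk_one, show (⟨2, by norm_num⟩ : Fin 3) = 2 from rfl, Fin.reduceAdd, Fin.isValue, show ((0:Fin 3)+1) = 1 from rfl, show ((0:Fin 3)+2) = 2 from rfl, show ((1:Fin 3)+1) = 2 from rfl, show ((1:Fin 3)+2) = 0 from rfl, show ((2:Fin 3)+1) = 0 from rfl, show ((2:Fin 3)+2) = 1 from rfl, cross2, Prod.fst_sub, Prod.snd_sub] <;>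
        ring
    have h2 : cross2 (B (j + 1) - C j) (B (j + 2) - C j) =
        cross2 (B (j + 2) - B (j + 1)) (C j - B (j + 1)) := by
      simp only [cross2, Prod.fst_sub, Prod.snd_sub]; ring
    have h3 := hside j
    rw [h1] at h3
    rw [h2]
    nlinarith
  have hsum : ∀ j, Sjarea B C j + S0area B ≠ 0 := by
    intro j
    have h1 : 0 < S0area B := by rw [S0area, abs_of_pos hB]; linarith
    have h2 : 0 ≤ Sjarea B C j := by rw [Sjarea]; positivity
    linarith
  have hS0eq : S0area B = cross2 (B 1 - B 0) (B 2 - B 0) / 2 := by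
    rw [S0area, abs_of_pos hB]
  have hcy1 : cross2 (B 2 - B 1) (B 0 - B 1) = cross2 (B 1 - B 0) (B 2 - B 0) := by
    simp only [cross2, Prod.fst_sub, Prod.snd_sub]; ring
  have hcy2 : cross2 (B 0 - B 2) (B 1 - B 2) = cross2 (B 1 - B 0) (B 2 - B 0) := by
    simp only [cross2, Prod.fst_sub, Prod.snd_sub]; ring
  have h10 : cross2 (B 2 - B 1) (B 0 - B 1) ≠ 0 := by rw [hcy1]; exact hD0
  have h20 : cross2 (B 0 - B 2) (B 1 - B 2) ≠ 0 := by rw [hcy2]; exact hD0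
  obtain ⟨m1, m2, m3⟩ := bary_one_cyc (B 0) (B 1) (B 2) hD0
  refine ⟨?_, ?_, ?_, ?_⟩
  · intro x _
    unfold psiT0c
    simp only [wT_eq, wP_eq, Fin.sum_univ_three]
    apply div2_combo
  · intro j x _
    unfold psiT0nb
    simp only [wT_eq]
    apply div2_smul_cvf
  · intro j
    fin_cases j
    · constructor
      · -- NormalCont, j = 0
        intro s hs
        obtain ⟨n1, n2, n3⟩ := bary_one_cyc (C 0) (B 1) (B 2) (by simpa using hC 0)
        unfold psiT0c psiT0nb
        simp only [wT_eq, wP_eq, Fin.sum_univ_three, dot2_add, dot2_smul]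
        simp only [Fin.mk_zero, Fin.mk_one, show (⟨2, by norm_num⟩ : Fin 3) = 2 from rfl, Fin.reduceAdd, Fin.isValue, show ((0:Fin 3)+1) = 1 from rfl, show ((0:Fin 3)+2) = 2 from rfl, show ((1:Fin 3)+1) = 2 from rfl, show ((1:Fin 3)+2) = 0 from rfl, show ((2:Fin 3)+1) = 0 from rfl, show ((2:Fin 3)+2) = 1 from rfl]
        simp only [normal_cvf, aff_bt, aff_bt3, aff_one3, bary_snd, bary_thd,
          m1, m2, m3, n1, n2, n3]
        field_simp [hsum 0, hsum 1, hsum 2]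
        ring
      · -- TangMeanCont, j = 0
        have hn : cross2 (B 1 - C 0) (B 2 - C 0) < 0 := by simpa using hDjneg 0
        have hSj : Sjarea B C 0 = -cross2 (B 1 - C 0) (B 2 - C 0) / 2 := by
          rw [Sjarea]
          simp only [Fin.isValue, Fin.reduceAdd]
          rw [abs_of_neg hn]
        unfold TangMeanCont psiT0c psiT0nb
        simp only [wT_eq, wP_eq, Fin.sum_univ_three, dot2_add, dot2_smul]
        simp only [Fin.mk_zero, Fin.mk_one, show (⟨2, by norm_num⟩ : Fin 3) = 2 from rfl, Fin.reduceAdd, Fin.isValue, show ((0:Fin 3)+1) = 1 from rfl, show ((0:Fin 3)+2) = 2 from rfl, show ((1:Fin 3)+1) = 2 from rfl, show ((1:Fin 3)+2) = 0 from rfl, show ((2:Fin 3)+1) = 0 from rfl, show ((2:Fin 3)+2) = 1 from rfl]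
        rw [int_tang_combo, intervalIntegral.integral_const_mul]
        rw [far1 (B 1) (B 2) (B 0) h10, far2 (B 2) (B 0) (B 1) h20, far3 (B 0) (B 1) (B 2)]
        rw [near1 (B 0) (B 1) (B 2) hD0, near2 (B 1) (B 2) (B 0) h10,
          near3 (B 2) (B 0) (B 1) h20,
          near1 (C 0) (B 1) (B 2) (by simpa using hC 0)]
        simp only [hcy1, hcy2, hS0eq, hSj, mul_zero, add_zero, zero_add]
        have hd : -cross2 (B 1 - C 0) (B 2 - C 0) / 2 +
            cross2 (B 1 - B 0) (B 2 - B 0) / 2 ≠ 0 := ne_of_gt (by linarith)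
        set a := cross2 (B 1 - B 0) (B 2 - B 0) with ha
        set b := cross2 (B 1 - C 0) (B 2 - C 0) with hb
        have hab1 : a - b ≠ 0 := ne_of_gt (by linarith)
        have hab2 : b - a ≠ 0 := ne_of_lt (by linarith)
        have hbne : b ≠ 0 := ne_of_lt hn
        have hk : (-b / 2 - 2 * (a / 2)) / (-b / 2 + a / 2) = (b + 2 * a) / (b - a) := by
          rw [div_eq_div_iff hd hab2]; ring
        have hr : -b / 2 / (-b / 2 + a / 2) = b / (b - a) := by
          rw [div_eq_div_iff hd hab2]; ring
        rw [hk, hr]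
        simp only [dot2, Prod.fst_sub, Prod.snd_sub]
        field_simp [hD0, hbne, hab1, hab2]
        ring
    · constructor
      · -- NormalCont, j = 1
        intro s hs
        obtain ⟨n1, n2, n3⟩ := bary_one_cyc (C 1) (B 2) (B 0) (by simpa using hC 1)
        unfold psiT0c psiT0nb
        simp only [wT_eq, wP_eq, Fin.sum_univ_three, dot2_add, dot2_smul]
        simp only [Fin.mk_zero, Fin.mk_one, show (⟨2, by norm_num⟩ : Fin 3) = 2 from rfl, Fin.reduceAdd, Fin.isValue, show ((0:Fin 3)+1) = 1 from rfl, show ((0:Fin 3)+2) = 2 from rfl, show ((1:Fin 3)+1) = 2 from rfl, show ((1:Fin 3)+2) = 0 from rfl, show ((2:Fin 3)+1) = 0 from rfl, show ((2:Fin 3)+2) = 1 from rfl]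
        simp only [normal_cvf, aff_bt, aff_bt3, aff_one3, bary_snd, bary_thd,
          m1, m2, m3, n1, n2, n3]
        field_simp [hsum 0, hsum 1, hsum 2]
        ring
      · -- TangMeanCont, j = 1
        have hn : cross2 (B 2 - C 1) (B 0 - C 1) < 0 := by simpa using hDjneg 1
        have hSj : Sjarea B C 1 = -cross2 (B 2 - C 1) (B 0 - C 1) / 2 := by
          rw [Sjarea]
          simp only [Fin.isValue, Fin.reduceAdd]
          rw [abs_of_neg hn]
        unfold TangMeanCont psiT0c psiT0nb
        simp only [wT_eq, wP_eq, Fin.sum_univ_three, dot2_add, dot2_smul]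
        simp only [Fin.mk_zero, Fin.mk_one, show (⟨2, by norm_num⟩ : Fin 3) = 2 from rfl, Fin.reduceAdd, Fin.isValue, show ((0:Fin 3)+1) = 1 from rfl, show ((0:Fin 3)+2) = 2 from rfl, show ((1:Fin 3)+1) = 2 from rfl, show ((1:Fin 3)+2) = 0 from rfl, show ((2:Fin 3)+1) = 0 from rfl, show ((2:Fin 3)+2) = 1 from rfl]
        rw [int_tang_combo, intervalIntegral.integral_const_mul]
        rw [far1 (B 2) (B 0) (B 1) h20, far2 (B 0) (B 1) (B 2) hD0, far3 (B 1) (B 2) (B 0)]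
        rw [near1 (B 1) (B 2) (B 0) h10, near2 (B 2) (B 0) (B 1) h20,
          near3 (B 0) (B 1) (B 2) hD0,
          near1 (C 1) (B 2) (B 0) (by simpa using hC 1)]
        simp only [hcy1, hcy2, hS0eq, hSj, mul_zero, add_zero, zero_add]
        have hd : -cross2 (B 2 - C 1) (B 0 - C 1) / 2 +
            cross2 (B 1 - B 0) (B 2 - B 0) / 2 ≠ 0 := ne_of_gt (by linarith)
        set a := cross2 (B 1 - B 0) (B 2 - B 0) with ha
        set b := cross2 (B 2 - C 1) (B 0 - C 1) with hb
        have hab1 : a - b ≠ 0 := ne_of_gt (by linarith)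
        have hab2 : b - a ≠ 0 := ne_of_lt (by linarith)
        have hbne : b ≠ 0 := ne_of_lt hn
        have hk : (-b / 2 - 2 * (a / 2)) / (-b / 2 + a / 2) = (b + 2 * a) / (b - a) := by
          rw [div_eq_div_iff hd hab2]; ring
        have hr : -b / 2 / (-b / 2 + a / 2) = b / (b - a) := by
          rw [div_eq_div_iff hd hab2]; ring
        rw [hk, hr]
        simp only [dot2, Prod.fst_sub, Prod.snd_sub]
        field_simp [hD0, hbne, hab1, hab2]
        ring
    · constructor
      · -- NormalCont, j = 2
        intro s hs
        obtain ⟨n1, n2, n3⟩ := bary_one_cyc (C 2) (B 0) (B 1) (by simpa using hC 2)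
        unfold psiT0c psiT0nb
        simp only [wT_eq, wP_eq, Fin.sum_univ_three, dot2_add, dot2_smul]
        simp only [Fin.mk_zero, Fin.mk_one, show (⟨2, by norm_num⟩ : Fin 3) = 2 from rfl, Fin.reduceAdd, Fin.isValue, show ((0:Fin 3)+1) = 1 from rfl, show ((0:Fin 3)+2) = 2 from rfl, show ((1:Fin 3)+1) = 2 from rfl, show ((1:Fin 3)+2) = 0 from rfl, show ((2:Fin 3)+1) = 0 from rfl, show ((2:Fin 3)+2) = 1 from rfl]
        simp only [normal_cvf, aff_bt, aff_bt3, aff_one3, bary_snd, bary_thd,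
          m1, m2, m3, n1, n2, n3]
        field_simp [hsum 0, hsum 1, hsum 2]
        ring
      · -- TangMeanCont, j = 2
        have hn : cross2 (B 0 - C 2) (B 1 - C 2) < 0 := by simpa using hDjneg 2
        have hSj : Sjarea B C 2 = -cross2 (B 0 - C 2) (B 1 - C 2) / 2 := by
          rw [Sjarea]
          simp only [Fin.isValue, Fin.reduceAdd]
          rw [abs_of_neg hn]
        unfold TangMeanCont psiT0c psiT0nb
        simp only [wT_eq, wP_eq, Fin.sum_univ_three, dot2_add, dot2_smul]
        simp only [Fin.mk_zero, Fin.mk_one, show (⟨2, by norm_num⟩ : Fin 3) = 2 from rfl, Fin.reduceAdd, Fin.isValue, show ((0:Fin 3)+1) = 1 from rfl, show ((0:Fin 3)+2) = 2 from rfl, show ((1:Fin 3)+1) = 2 from rfl, show ((1:Fin 3)+2) = 0 from rfl, show ((2:Fin 3)+1) = 0 from rfl, show ((2:Fin 3)+2) = 1 from rfl]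
        rw [int_tang_combo, intervalIntegral.integral_const_mul]
        rw [far1 (B 0) (B 1) (B 2) hD0, far2 (B 1) (B 2) (B 0) h10, far3 (B 2) (B 0) (B 1)]
        rw [near1 (B 2) (B 0) (B 1) h20, near2 (B 0) (B 1) (B 2) hD0,
          near3 (B 1) (B 2) (B 0) h10,
          near1 (C 2) (B 0) (B 1) (by simpa using hC 2)]
        simp only [hcy1, hcy2, hS0eq, hSj, mul_zero, add_zero, zero_add]
        have hd : -cross2 (B 0 - C 2) (B 1 - C 2) / 2 +
            cross2 (B 1 - B 0) (B 2 - B 0) / 2 ≠ 0 := ne_of_gt (by linarith)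
        set a := cross2 (B 1 - B 0) (B 2 - B 0) with ha
        set b := cross2 (B 0 - C 2) (B 1 - C 2) with hb
        have hab1 : a - b ≠ 0 := ne_of_gt (by linarith)
        have hab2 : b - a ≠ 0 := ne_of_lt (by linarith)
        have hbne : b ≠ 0 := ne_of_lt hn
        have hk : (-b / 2 - 2 * (a / 2)) / (-b / 2 + a / 2) = (b + 2 * a) / (b - a) := by
          rw [div_eq_div_iff hd hab2]; ring
        have hr : -b / 2 / (-b / 2 + a / 2) = b / (b - a) := by
          rw [div_eq_div_iff hd hab2]; ring
        rw [hk, hr]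
        simp only [dot2, Prod.fst_sub, Prod.snd_sub]
        field_simp [hD0, hbne, hab1, hab2]
        ring
  · intro j
    fin_cases j
    · refine ⟨?_, ?_, ?_, ?_⟩
      · -- NormalZero (C 0) (B 1)
        intro s hs
        obtain ⟨n1, n2, n3⟩ := bary_one_cyc (C 0) (B 1) (B 2) (by simpa using hC 0)
        unfold psiT0nb
        simp only [wT_eq, dot2_smul]
        simp only [Fin.mk_zero, Fin.mk_one, show (⟨2, by norm_num⟩ : Fin 3) = 2 from rfl, Fin.reduceAdd, Fin.isValue, show ((0:Fin 3)+1) = 1 from rfl, show ((0:Fin 3)+2) = 2 from rfl, show ((1:Fin 3)+1) = 2 from rfl, show ((1:Fin 3)+2) = 0 from rfl, show ((2:Fin 3)+1) = 0 from rfl, show ((2:Fin 3)+2) = 1 from rfl]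
        simp only [normal_cvf, aff_bt, aff_bt3, bary_snd, bary_thd, n1, n2, n3]
        ring
      · -- TangMeanZero (C 0) (B 1)
        unfold TangMeanZero psiT0nb
        simp only [wT_eq, dot2_smul]
        simp only [Fin.mk_zero, Fin.mk_one, show (⟨2, by norm_num⟩ : Fin 3) = 2 from rfl, Fin.reduceAdd, Fin.isValue, show ((0:Fin 3)+1) = 1 from rfl, show ((0:Fin 3)+2) = 2 from rfl, show ((1:Fin 3)+1) = 2 from rfl, show ((1:Fin 3)+2) = 0 from rfl, show ((2:Fin 3)+1) = 0 from rfl, show ((2:Fin 3)+2) = 1 from rfl]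
        rw [intervalIntegral.integral_const_mul, far1 (C 0) (B 1) (B 2) (by simpa using hC 0),
          mul_zero]
      · -- NormalZero (C 0) (B 2)
        intro s hs
        obtain ⟨n1, n2, n3⟩ := bary_one_cyc (C 0) (B 1) (B 2) (by simpa using hC 0)
        unfold psiT0nb
        simp only [wT_eq, dot2_smul]
        simp only [Fin.mk_zero, Fin.mk_one, show (⟨2, by norm_num⟩ : Fin 3) = 2 from rfl, Fin.reduceAdd, Fin.isValue, show ((0:Fin 3)+1) = 1 from rfl, show ((0:Fin 3)+2) = 2 from rfl, show ((1:Fin 3)+1) = 2 from rfl, show ((1:Fin 3)+2) = 0 from rfl, show ((2:Fin 3)+1) = 0 from rfl, show ((2:Fin 3)+2) = 1 from rfl]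
        simp only [normal_cvf, aff_bt, aff_bt3, bary_snd, bary_thd, n1, n2, n3]
        ring
      · -- TangMeanZero (C 0) (B 2)
        unfold TangMeanZero psiT0nb
        simp only [wT_eq, dot2_smul]
        simp only [Fin.mk_zero, Fin.mk_one, show (⟨2, by norm_num⟩ : Fin 3) = 2 from rfl, Fin.reduceAdd, Fin.isValue, show ((0:Fin 3)+1) = 1 from rfl, show ((0:Fin 3)+2) = 2 from rfl, show ((1:Fin 3)+1) = 2 from rfl, show ((1:Fin 3)+2) = 0 from rfl, show ((2:Fin 3)+1) = 0 from rfl, show ((2:Fin 3)+2) = 1 from rfl]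
        rw [intervalIntegral.integral_const_mul, far4 (C 0) (B 1) (B 2) (by simpa using hC 0),
          mul_zero]
    · refine ⟨?_, ?_, ?_, ?_⟩
      · -- NormalZero (C 1) (B 2)
        intro s hs
        obtain ⟨n1, n2, n3⟩ := bary_one_cyc (C 1) (B 2) (B 0) (by simpa using hC 1)
        unfold psiT0nb
        simp only [wT_eq, dot2_smul]
        simp only [Fin.mk_zero, Fin.mk_one, show (⟨2, by norm_num⟩ : Fin 3) = 2 from rfl, Fin.reduceAdd, Fin.isValue, show ((0:Fin 3)+1) = 1 from rfl, show ((0:Fin 3)+2) = 2 from rfl, show ((1:Fin 3)+1) = 2 from rfl, show ((1:Fin 3)+2) = 0 from rfl, show ((2:Fin 3)+1) = 0 from rfl, show ((2:Fin 3)+2) = 1 from rfl]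
        simp only [normal_cvf, aff_bt, aff_bt3, bary_snd, bary_thd, n1, n2, n3]
        ring
      · -- TangMeanZero (C 1) (B 2)
        unfold TangMeanZero psiT0nb
        simp only [wT_eq, dot2_smul]
        simp only [Fin.mk_zero, Fin.mk_one, show (⟨2, by norm_num⟩ : Fin 3) = 2 from rfl, Fin.reduceAdd, Fin.isValue, show ((0:Fin 3)+1) = 1 from rfl, show ((0:Fin 3)+2) = 2 from rfl, show ((1:Fin 3)+1) = 2 from rfl, show ((1:Fin 3)+2) = 0 from rfl, show ((2:Fin 3)+1) = 0 from rfl, show ((2:Fin 3)+2) = 1 from rfl]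
        rw [intervalIntegral.integral_const_mul, far1 (C 1) (B 2) (B 0) (by simpa using hC 1),
          mul_zero]
      · -- NormalZero (C 1) (B 0)
        intro s hs
        obtain ⟨n1, n2, n3⟩ := bary_one_cyc (C 1) (B 2) (B 0) (by simpa using hC 1)
        unfold psiT0nb
        simp only [wT_eq, dot2_smul]
        simp only [Fin.mk_zero, Fin.mk_one, show (⟨2, by norm_num⟩ : Fin 3) = 2 from rfl, Fin.reduceAdd, Fin.isValue, show ((0:Fin 3)+1) = 1 from rfl, show ((0:Fin 3)+2) = 2 from rfl, show ((1:Fin 3)+1) = 2 from rfl, show ((1:Fin 3)+2) = 0 from rfl, show ((2:Fin 3)+1) = 0 from rfl, show ((2:Fin 3)+2) = 1 from rfl]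
        simp only [normal_cvf, aff_bt, aff_bt3, bary_snd, bary_thd, n1, n2, n3]
        ring
      · -- TangMeanZero (C 1) (B 0)
        unfold TangMeanZero psiT0nb
        simp only [wT_eq, dot2_smul]
        simp only [Fin.mk_zero, Fin.mk_one, show (⟨2, by norm_num⟩ : Fin 3) = 2 from rfl, Fin.reduceAdd, Fin.isValue, show ((0:Fin 3)+1) = 1 from rfl, show ((0:Fin 3)+2) = 2 from rfl, show ((1:Fin 3)+1) = 2 from rfl, show ((1:Fin 3)+2) = 0 from rfl, show ((2:Fin 3)+1) = 0 from rfl, show ((2:Fin 3)+2) = 1 from rfl]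
        rw [intervalIntegral.integral_const_mul, far4 (C 1) (B 2) (B 0) (by simpa using hC 1),
          mul_zero]
    · refine ⟨?_, ?_, ?_, ?_⟩
      · -- NormalZero (C 2) (B 0)
        intro s hs
        obtain ⟨n1, n2, n3⟩ := bary_one_cyc (C 2) (B 0) (B 1) (by simpa using hC 2)
        unfold psiT0nb
        simp only [wT_eq, dot2_smul]
        simp only [Fin.mk_zero, Fin.mk_one, show (⟨2, by norm_num⟩ : Fin 3) = 2 from rfl, Fin.reduceAdd, Fin.isValue, show ((0:Fin 3)+1) = 1 from rfl, show ((0:Fin 3)+2) = 2 from rfl, show ((1:Fin 3)+1) = 2 from rfl, show ((1:Fin 3)+2) = 0 from rfl, show ((2:Fin 3)+1) = 0 from rfl, show ((2:Fin 3)+2) = 1 from rfl]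
        simp only [normal_cvf, aff_bt, aff_bt3, bary_snd, bary_thd, n1, n2, n3]
        ring
      · -- TangMeanZero (C 2) (B 0)
        unfold TangMeanZero psiT0nb
        simp only [wT_eq, dot2_smul]
        simp only [Fin.mk_zero, Fin.mk_one, show (⟨2, by norm_num⟩ : Fin 3) = 2 from rfl, Fin.reduceAdd, Fin.isValue, show ((0:Fin 3)+1) = 1 from rfl, show ((0:Fin 3)+2) = 2 from rfl, show ((1:Fin 3)+1) = 2 from rfl, show ((1:Fin 3)+2) = 0 from rfl, show ((2:Fin 3)+1) = 0 from rfl, show ((2:Fin 3)+2) = 1 from rfl]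
        rw [intervalIntegral.integral_const_mul, far1 (C 2) (B 0) (B 1) (by simpa using hC 2),
          mul_zero]
      · -- NormalZero (C 2) (B 1)
        intro s hs
        obtain ⟨n1, n2, n3⟩ := bary_one_cyc (C 2) (B 0) (B 1) (by simpa using hC 2)
        unfold psiT0nb
        simp only [wT_eq, dot2_smul]
        simp only [Fin.mk_zero, Fin.mk_one, show (⟨2, by norm_num⟩ : Fin 3) = 2 from rfl, Fin.reduceAdd, Fin.isValue, show ((0:Fin 3)+1) = 1 from rfl, show ((0:Fin 3)+2) = 2 from rfl, show ((1:Fin 3)+1) = 2 from rfl, show ((1:Fin 3)+2) = 0 from rfl, show ((2:Fin 3)+1) = 0 from rfl, show ((2:Fin 3)+2) = 1 from rfl]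
        simp only [normal_cvf, aff_bt, aff_bt3, bary_snd, bary_thd, n1, n2, n3]
        ring
      · -- TangMeanZero (C 2) (B 1)
        unfold TangMeanZero psiT0nb
        simp only [wT_eq, dot2_smul]
        simp only [Fin.mk_zero, Fin.mk_one, show (⟨2, by norm_num⟩ : Fin 3) = 2 from rfl, Fin.reduceAdd, Fin.isValue, show ((0:Fin 3)+1) = 1 from rfl, show ((0:Fin 3)+2) = 2 from rfl, show ((1:Fin 3)+1) = 2 from rfl, show ((1:Fin 3)+2) = 0 from rfl, show ((2:Fin 3)+1) = 0 from rfl, show ((2:Fin 3)+2) = 1 from rfl]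
        rw [intervalIntegral.integral_const_mul, far4 (C 2) (B 0) (B 1) (by simpa using hC 2),
          mul_zero]
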